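/- If E ≥ 1, ε ≥ 0 and r := max{Eε/2, ε} satisfies r < 1, then (1 − ε)^{1−E} − 1 ≤ (E − 1)·ε/(1 − r). -/

import Mathlib

/-- Bernoulli-type bound: `(1-s)^b (1+bs) ≤ 1` for `b ≥ 0`, `0 ≤ s ≤ 1`. -/
private lemma lemA {b s : ℝ} (hb : 0 ≤ b) (hs : 0 ≤ s) (hs1 : s ≤ 1) :
    (1 - s) ^ b * (1 + b * s) ≤ 1 := by
  have h0 : (0:ℝ) ≤ 1 - s := by linarith
  have h1 : (1 - s : ℝ) ≤ Real.exp (-s) := by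
    have := Real.add_one_le_exp (-s); linarith
  have h2 : (1 - s) ^ b ≤ Real.exp (-s) ^ b := Real.rpow_le_rpow h0 h1 hb
  have h3 : Real.exp (-s) ^ b = Real.exp (-(b * s)) := by
    rw [← Real.exp_mul]; ring_nf
  have h4 : 1 + b * s ≤ Real.exp (b * s) := by
    have := Real.add_one_le_exp (b * s); linarith
  have hpos : (0:ℝ) ≤ 1 + b * s := by positivity
  calc (1 - s) ^ b * (1 + b * s) ≤ Real.exp (-(b * s)) * (1 + b * s) := by
        rw [← h3]; exact mul_le_mul_of_nonneg_right h2 hpos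
    _ ≤ Real.exp (-(b * s)) * Real.exp (b * s) :=
        mul_le_mul_of_nonneg_left h4 (Real.exp_nonneg _)
    _ = 1 := by rw [← Real.exp_add]; simp

/-- Key estimate for the case `E ≥ 2`. -/
private lemma lemB {a ε : ℝ} (ha : 1 ≤ a) (hε : 0 ≤ ε) (hε1 : ε < 1) :
    1 - (a + 1) * ε / 2 ≤ (1 - ε) ^ a * (1 + (a - 1) * ε / 2) := by
  set f : ℝ → ℝ := fun s => (1 - s) ^ a * (1 + (a - 1) * s / 2) + (a + 1) * s / 2 with hf
  have hderiv : ∀ x ∈ Set.Ioo (0:ℝ) ε, HasDerivAt f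
      ((-1) * a * (1 - x) ^ (a - 1) * (1 + (a - 1) * x / 2)
        + (1 - x) ^ a * ((a - 1) / 2) + (a + 1) / 2) x := by
    intro x hx
    have hx1 : 0 < 1 - x := by
      have : x < ε := hx.2
      linarith
    have h1 : HasDerivAt (fun s : ℝ => 1 - s) (-1) x := by
      simpa using (hasDerivAt_id x).const_sub 1
    have h2 : HasDerivAt (fun s : ℝ => (1 - s) ^ a) ((-1) * a * (1 - x) ^ (a - 1)) x :=
      h1.rpow_const (Or.inl hx1.ne')
    have h3 : HasDerivAt (fun s : ℝ => 1 + (a - 1) * s / 2) ((a - 1) / 2) x := by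
      have := ((hasDerivAt_id x).const_mul ((a - 1) / 2)).const_add 1
      convert this using 1
      case e'_8 => funext s; simp [id]; ring
      case e'_9 => ring
      all_goals exact rfl
    have h5 : HasDerivAt (fun s : ℝ => (a + 1) * s / 2) ((a + 1) / 2) x := by
      have := (hasDerivAt_id x).const_mul ((a + 1) / 2)
      convert this using 1
      case e'_8 => funext s; simp [id]; ring
      case e'_9 => ring
      all_goals exact rfl
    have h4 := (h2.mul h3).add h5
    convert h4 using 1
    all_goals exact rfl
  have key : MonotoneOn f (Set.Icc 0 ε) := by
    apply monotoneOn_of_deriv_nonneg (convex_Icc 0 ε)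
    · apply ContinuousOn.add
      · apply ContinuousOn.mul
        · exact ContinuousOn.rpow_const (by fun_prop) (fun x _ => Or.inr (by linarith))
        · fun_prop
      · fun_prop
    · intro x hx
      rw [interior_Icc] at hx
      exact (hderiv x hx).differentiableAt.differentiableWithinAt
    · intro x hx
      rw [interior_Icc] at hx
      rw [(hderiv x hx).deriv]
      have hx1 : 0 < 1 - x := by
        have : x < ε := hx.2
        linarith
      have hsplit : (1 - x) ^ a = (1 - x) ^ (a - 1) * (1 - x) := by
        rw [← Real.rpow_add_one hx1.ne' (a - 1)]
        ring_nf
      have hA : (1 - x) ^ (a - 1) * (1 + (a - 1) * x) ≤ 1 :=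
        lemA (by linarith) hx.1.le (by linarith [hx.2])
      rw [hsplit]
      nlinarith [hA, Real.rpow_nonneg hx1.le (a - 1)]
  have h01 : (0:ℝ) ∈ Set.Icc (0:ℝ) ε := Set.mem_Icc.mpr ⟨le_refl 0, hε⟩
  have h02 : ε ∈ Set.Icc (0:ℝ) ε := Set.mem_Icc.mpr ⟨hε, le_refl ε⟩
  have := key h01 h02 hε
  simp only [hf] at this
  rw [sub_zero, Real.one_rpow] at this
  linarith

theorem stmt3 (E ε : ℝ) (hE : 1 ≤ E) (hε : 0 ≤ ε)
    (hr : max (E * ε / 2) ε < 1) :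
    (1 - ε) ^ (1 - E) - 1 ≤ (E - 1) * ε / (1 - max (E * ε / 2) ε) := by
  have hε1 : ε < 1 := lt_of_le_of_lt (le_max_right _ _) hr
  have hc : (0:ℝ) < 1 - ε := by linarith
  rcases le_total E 2 with h2 | h2
  · -- case E ≤ 2
    have hmax : max (E * ε / 2) ε = ε := max_eq_right (by nlinarith)
    rw [hmax] at hr ⊢
    have hgm := Real.geom_mean_le_arith_mean2_weighted
      (w₁ := 2 - E) (w₂ := E - 1) (p₁ := 1 - ε) (p₂ := 1)
      (by linarith) (by linarith) hc.le zero_le_one (by ring)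
    rw [Real.one_rpow, mul_one] at hgm
    have hsplit : (1 - ε) ^ (2 - E) = (1 - ε) ^ (1 - E) * (1 - ε) := by
      rw [← Real.rpow_add_one hc.ne' (1 - E)]
      ring_nf
    rw [hsplit] at hgm
    rw [sub_le_iff_le_add, div_add' _ _ _ hc.ne', le_div_iff₀ hc]
    nlinarith [hgm]
  · -- case E ≥ 2
    have hmax : max (E * ε / 2) ε = E * ε / 2 := max_eq_left (by nlinarith)
    rw [hmax] at hr ⊢
    have hd : (0:ℝ) < 1 - E * ε / 2 := by linarith
    have hB := lemB (a := E - 1) (by linarith) hε hε1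
    have hY : (0:ℝ) < (1 - ε) ^ (E - 1) := Real.rpow_pos_of_pos hc (E - 1)
    have hX : (1 - ε) ^ (1 - E) = ((1 - ε) ^ (E - 1))⁻¹ := by
      rw [show (1 - E) = -(E - 1) by ring, Real.rpow_neg hc.le]
    rw [hX, sub_le_iff_le_add, div_add' _ _ _ hd.ne', le_div_iff₀ hd]
    have hB2 : ((1 - ε) ^ (E - 1))⁻¹ * (1 - (E - 1 + 1) * ε / 2)
        ≤ ((1 - ε) ^ (E - 1))⁻¹ * ((1 - ε) ^ (E - 1) * (1 + (E - 1 - 1) * ε / 2)) :=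
      mul_le_mul_of_nonneg_left hB (inv_nonneg.mpr hY.le)
    rw [← mul_assoc, inv_mul_cancel₀ hY.ne', one_mul] at hB2
    nlinarith [hB2]
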